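/- arXiv:1111.4066 — 4 statements merged into one kernel-verified Lean document; each statement's English description precedes it below -/
import Mathlib

section
/- Let k ≥ 2 be an integer, c_1, …, c_k complex numbers with c_2 ≠ 0, and n ≥ 1. If B_{k,n} is formed with t_j = c_j for 1 ≤ j ≤ k, then det(B_{k,n}) = f^1_{k,n}. -/
open Finset

noncomputable def detH (m : ℕ) (a : ℕ → ℕ → ℂ) : ℂ :=
  Matrix.det (Matrix.of fun i j : Fin m => a (i.1 + 1) (j.1 + 1))

/-- Entry (i,j) (1-based) of the matrix `B_{k,n}`:
`-t_2` if `j = i+1`, `t_{i-j+1} / t_2^{i-j}` if `0 ≤ i-j < k`, and `0` otherwise. -/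
noncomputable def bEntry (k : ℕ) (t : ℤ → ℂ) (i j : ℕ) : ℂ :=
  if j = i + 1 then -t 2
  else if 0 ≤ (i : ℤ) - j ∧ (i : ℤ) - j < k then
    t ((i : ℤ) - j + 1) / t 2 ^ ((i : ℤ) - j)
  else 0

noncomputable def Bmat (k : ℕ) (t : ℤ → ℂ) (n : ℕ) : Matrix (Fin n) (Fin n) ℂ :=
  Matrix.of fun i j => bEntry k t (i.1 + 1) (j.1 + 1)

noncomputable def Dmat (k : ℕ) (t : ℤ → ℂ) (m g : ℕ) : Matrix (Fin (m+1)) (Fin (m+1)) ℂ :=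
  Matrix.of fun i j => if i.1 = m then bEntry k t g (j.1 + 1) else bEntry k t (i.1 + 1) (j.1 + 1)

lemma bEntry_of_gt (k : ℕ) (t : ℤ → ℂ) {i j : ℕ} (h : i + 1 < j) : bEntry k t i j = 0 := by
  unfold bEntry
  rw [if_neg (by omega), if_neg (by omega)]

lemma bEntry_superdiag (k : ℕ) (t : ℤ → ℂ) (i : ℕ) : bEntry k t i (i+1) = -t 2 := by
  unfold bEntry; rw [if_pos rfl]

lemma bEntry_low (k : ℕ) (t : ℤ → ℂ) {i j : ℕ} (h1 : j ≤ i) (h2 : (i:ℤ) - j < k) :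
    bEntry k t i j = t ((i:ℤ) - j + 1) / t 2 ^ ((i:ℤ) - j) := by
  unfold bEntry
  rw [if_neg (by omega), if_pos ⟨by omega, h2⟩]

lemma bEntry_far (k : ℕ) (t : ℤ → ℂ) {i j : ℕ} (h1 : j ≤ i) (h2 : (k:ℤ) ≤ (i:ℤ) - j) :
    bEntry k t i j = 0 := by
  unfold bEntry
  rw [if_neg (by omega), if_neg (by omega)]

lemma detD_base (k : ℕ) (t : ℤ → ℂ) (g : ℕ) :
    (Dmat k t 0 g).det = bEntry k t g 1 := by
  rw [Matrix.det_fin_one]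
  simp [Dmat]

lemma detD_rec (k : ℕ) (t : ℤ → ℂ) (m g : ℕ) :
    (Dmat k t (m+1) g).det
      = t 2 * (Dmat k t m g).det + bEntry k t g (m+2) * (Bmat k t (m+1)).det := by
  rw [Matrix.det_succ_column _ (Fin.last (m+1))]
  rw [Fin.sum_univ_castSucc, Fin.sum_univ_castSucc]
  have hz : ∀ i : Fin m,
      (-1 : ℂ) ^ ((i.castSucc.castSucc : Fin (m+2)).1 + (Fin.last (m+1)).1) *
        (Dmat k t (m+1) g) i.castSucc.castSucc (Fin.last (m+1)) *
        ((Dmat k t (m+1) g).submatrix (i.castSucc.castSucc).succAbove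
          (Fin.last (m+1)).succAbove).det = 0 := by
    intro i
    have : (Dmat k t (m+1) g) i.castSucc.castSucc (Fin.last (m+1)) = 0 := by
      have hi : (i.castSucc.castSucc : Fin (m+2)).1 = i.1 := rfl
      have hlt := i.isLt
      simp only [Dmat, Matrix.of_apply, hi, Fin.val_last]
      rw [if_neg (by omega)]
      exact bEntry_of_gt k t (by omega)
    rw [this]; ring
  rw [Finset.sum_eq_zero (fun i _ => hz i), zero_add]
  have hA : (Dmat k t (m+1) g) (Fin.last m).castSucc (Fin.last (m+1)) = -t 2 := by
    simp only [Dmat, Matrix.of_apply, Fin.coe_castSucc, Fin.val_last]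
    rw [if_neg (by omega)]
    exact bEntry_superdiag k t (m+1)
  have hB : (Dmat k t (m+1) g) (Fin.last (m+1)) (Fin.last (m+1)) = bEntry k t g (m+2) := by
    simp [Dmat]
  have hM1 : (Dmat k t (m+1) g).submatrix ((Fin.last m).castSucc).succAbove
      (Fin.last (m+1)).succAbove = Dmat k t m g := by
    ext r c
    simp only [Matrix.submatrix_apply, Fin.succAbove_last, Dmat, Matrix.of_apply,
      Fin.coe_castSucc]
    by_cases hr : r.1 < m
    · have h1 : (Fin.castSucc (Fin.last m)).succAbove r = r.castSucc := by
        rw [Fin.succAbove_of_castSucc_lt]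
        simp [Fin.lt_def, hr]
      rw [h1]
      simp only [Fin.coe_castSucc]
      rw [if_neg (by omega), if_neg (by omega)]
    · have hr' : r.1 = m := by omega
      have h1 : (Fin.castSucc (Fin.last m)).succAbove r = r.succ := by
        rw [Fin.succAbove_of_le_castSucc]
        simp [Fin.le_def, hr']
      rw [h1]
      simp only [Fin.val_succ]
      rw [if_pos (by omega), if_pos hr']
  have hM2 : (Dmat k t (m+1) g).submatrix (Fin.last (m+1)).succAbove
      (Fin.last (m+1)).succAbove = Bmat k t (m+1) := by
    ext r c
    simp only [Matrix.submatrix_apply, Fin.succAbove_last, Dmat, Bmat, Matrix.of_apply,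
      Fin.coe_castSucc]
    rw [if_neg (by omega)]
  rw [hA, hB, hM1, hM2]
  simp only [Fin.coe_castSucc, Fin.val_last]
  have hsgn : (-1 : ℂ) ^ (m + (m+1)) = -1 := by
    have : Odd (m + (m+1)) := by exact ⟨m, by ring⟩
    exact this.neg_one_pow
  have hsgn2 : (-1 : ℂ) ^ ((m+1) + (m+1)) = 1 := by
    have : Even ((m+1) + (m+1)) := ⟨m+1, rfl⟩
    exact this.neg_one_pow
  rw [hsgn, hsgn2]
  ring

lemma detD_closed (k : ℕ) (t : ℤ → ℂ) (m g : ℕ) :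
    (Dmat k t m g).det
      = ∑ r ∈ Finset.range (m+1),
          t 2 ^ r * bEntry k t g (m+1-r) * (Bmat k t (m-r)).det := by
  induction m with
  | zero =>
      rw [detD_base]
      simp [Matrix.det_fin_zero]
  | succ m ih =>
      rw [detD_rec, ih]
      conv_rhs => rw [Finset.sum_range_succ']
      rw [Finset.mul_sum]
      congr 1
      · apply Finset.sum_congr rfl
        intro r hr
        have e1 : m + 1 + 1 - (r + 1) = m + 1 - r := by omega
        have e2 : m + 1 - (r + 1) = m - r := by omega
        rw [e1, e2]
        ring
      · simp

lemma Bmat_succ (k : ℕ) (t : ℤ → ℂ) (m : ℕ) :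
    Bmat k t (m+1) = Dmat k t m (m+1) := by
  ext i j
  simp only [Bmat, Dmat, Matrix.of_apply]
  by_cases hi : i.1 = m
  · rw [if_pos hi, hi]
  · rw [if_neg hi]

lemma sum_Icc_int (k : ℕ) (F : ℤ → ℂ) :
    ∑ j ∈ Finset.Icc (1:ℤ) (k:ℤ), F j = ∑ r ∈ Finset.range k, F ((r:ℤ)+1) := by
  induction k with
  | zero => simp
  | succ m ih =>
      have hins : Finset.Icc (1:ℤ) ((m:ℤ)+1) = insert ((m:ℤ)+1) (Finset.Icc 1 (m:ℤ)) := by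
        ext x
        simp only [Finset.mem_Icc, Finset.mem_insert]
        omega
      rw [Finset.sum_range_succ, ← ih]
      push_cast
      rw [hins, Finset.sum_insert (by simp)]
      ring

lemma detB_eq (k : ℕ) (hk : 2 ≤ k) (c : ℤ → ℂ) (hc2 : c 2 ≠ 0)
    (t : ℤ → ℂ) (htc : ∀ j : ℤ, 1 ≤ j → j ≤ (k : ℤ) → t j = c j)
    (f₁ : ℤ → ℂ) (hf₁zero : f₁ 0 = 1)
    (hf₁neg : ∀ n : ℤ, 1 - (k : ℤ) ≤ n → n < 0 → f₁ n = 0)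
    (hf₁rec : ∀ n : ℤ, 0 < n →
      f₁ n = ∑ j ∈ Finset.Icc (1 : ℤ) (k : ℤ), c j * f₁ (n - j)) :
    ∀ n : ℕ, (Bmat k t n).det = f₁ (n : ℤ) := by
  have ht2 : t 2 = c 2 := htc 2 (by norm_num) (by exact_mod_cast Nat.cast_le.mpr hk)
  have ht2' : t 2 ≠ 0 := by rw [ht2]; exact hc2
  intro n
  induction n using Nat.strong_induction_on with
  | _ n ih =>
    obtain _ | m := n
    · simpa using hf₁zero.symm
    · rw [Bmat_succ, detD_closed]
      have step : ∀ r ∈ Finset.range (m+1),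
          t 2 ^ r * bEntry k t (m+1) (m+1-r) * (Bmat k t (m-r)).det
            = (if r < k then c ((r:ℤ)+1) else 0) * f₁ ((m:ℤ) - r) := by
        intro r hr
        rw [Finset.mem_range] at hr
        have hE : (Bmat k t (m-r)).det = f₁ ((m:ℤ) - r) := by
          rw [ih (m-r) (by omega)]
          congr 1
          omega
        rw [hE]
        by_cases hrk : r < k
        · rw [if_pos hrk]
          rw [bEntry_low k t (by omega) (by omega)]
          have hij : ((m+1:ℕ):ℤ) - ((m+1-r:ℕ):ℤ) = (r:ℤ) := by omega
          rw [hij, zpow_natCast, mul_comm (t 2 ^ r), div_mul_cancel₀ _ (pow_ne_zero r ht2')]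
          rw [htc ((r:ℤ)+1) (by omega) (by omega)]
        · rw [if_neg hrk]
          rw [bEntry_far k t (by omega) (by omega)]
          ring
      rw [Finset.sum_congr rfl step]
      have hcst : ((m+1:ℕ):ℤ) = (m:ℤ)+1 := by push_cast; ring
      rw [hcst, hf₁rec ((m:ℤ)+1) (by omega), sum_Icc_int]
      have hsimp : ∀ r ∈ Finset.range k,
          c ((r:ℤ)+1) * f₁ ((m:ℤ)+1 - ((r:ℤ)+1))
            = (if r < k then c ((r:ℤ)+1) else 0) * f₁ ((m:ℤ) - r) := by
        intro r hr
        rw [Finset.mem_range] at hr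
        rw [if_pos hr]
        congr 2
        ring
      rw [Finset.sum_congr rfl hsimp]
      set g : ℕ → ℂ := fun r => (if r < k then c ((r:ℤ)+1) else 0) * f₁ ((m:ℤ) - r) with hg
      have hzero : ∀ r : ℕ, m + 1 ≤ r → r < k → g r = 0 := by
        intro r h1 h2
        simp only [hg, if_pos h2]
        rw [hf₁neg ((m:ℤ) - r) (by omega) (by omega), mul_zero]
      have hA : ∑ r ∈ Finset.range (m+1), g r = ∑ r ∈ Finset.range (max k (m+1)), g r := by
        apply Finset.sum_subset (Finset.range_subset_range.2 (le_max_right _ _))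
        intro r _ hnr
        rw [Finset.mem_range] at hnr
        by_cases h2 : r < k
        · exact hzero r (by omega) h2
        · simp only [hg, if_neg h2, zero_mul]
      have hB : ∑ r ∈ Finset.range k, g r = ∑ r ∈ Finset.range (max k (m+1)), g r := by
        apply Finset.sum_subset (Finset.range_subset_range.2 (le_max_left _ _))
        intro r _ hnr
        rw [Finset.mem_range] at hnr
        simp only [hg, if_neg hnr, zero_mul]
      rw [hA, ← hB]

theorem det_B_eq_kSOkF (k : ℕ) (hk : 2 ≤ k) (c : ℤ → ℂ) (hc2 : c 2 ≠ 0)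
    (t : ℤ → ℂ) (ht0 : t 0 = 1) (htc : ∀ j : ℤ, 1 ≤ j → j ≤ (k : ℤ) → t j = c j)
    (f₁ : ℤ → ℂ) (hf₁zero : f₁ 0 = 1)
    (hf₁neg : ∀ n : ℤ, 1 - (k : ℤ) ≤ n → n < 0 → f₁ n = 0)
    (hf₁rec : ∀ n : ℤ, 0 < n →
      f₁ n = ∑ j ∈ Finset.Icc (1 : ℤ) (k : ℤ), c j * f₁ (n - j))
    (n : ℕ) (hn : 1 ≤ n) :
    detH n (bEntry k t) = f₁ (n : ℤ) := by
  have h := detB_eq k hk c hc2 t htc f₁ hf₁zero hf₁neg hf₁rec n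
  simpa only [detH, Bmat] using h
end

section
/- Let k ≥ 2 be an integer and n ≥ 1. If B_{k,n} is formed with t_1 = 2 and t_j = 1 for 2 ≤ j ≤ k, then det(B_{k,n}) = p^k_{k,n+1}. -/
open Finset

lemma bE_shift (k : ℕ) (t : ℤ → ℂ) (s a b : ℕ) :
    bEntry k t (a + s) (b + s) = bEntry k t a b := by
  unfold bEntry
  have h1 : ((a + s : ℕ) : ℤ) - ((b + s : ℕ) : ℤ) = (a : ℤ) - b := by push_cast; ring
  have h2 : (b + s = a + s + 1) ↔ (b = a + 1) := by omega
  simp only [h1, h2]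

lemma bE_gt (k : ℕ) (t : ℤ → ℂ) (a b : ℕ) (h : a + 1 < b) : bEntry k t a b = 0 := by
  unfold bEntry
  rw [if_neg (by omega), if_neg (by omega)]

lemma bE_succ (k : ℕ) (t : ℤ → ℂ) (a : ℕ) : bEntry k t a (a + 1) = -t 2 := by
  unfold bEntry
  rw [if_pos rfl]

lemma bE_col (k : ℕ) (t : ℤ → ℂ) (ht2 : t 2 = 1) (i : ℕ) :
    bEntry k t (i + 1) 1 = if i < k then t ((i : ℤ) + 1) else 0 := by
  unfold bEntry
  rw [if_neg (by omega)]
  have h1 : ((i + 1 : ℕ) : ℤ) - ((1 : ℕ) : ℤ) = (i : ℤ) := by push_cast; ring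
  rw [h1, ht2, one_zpow, div_one]
  by_cases h : i < k
  · rw [if_pos ⟨by positivity, by exact_mod_cast h⟩, if_pos h]
  · rw [if_neg (by omega), if_neg h]

lemma minor_det (k : ℕ) (t : ℤ → ℂ) (ht2 : t 2 = 1) (m : ℕ) (i : Fin (m + 1)) :
    ((Matrix.of fun r c : Fin (m + 1) => bEntry k t (r.1 + 1) (c.1 + 1)).submatrix
        i.succAbove Fin.succ).det = (-1) ^ (i.1) * detH (m - i.1) (bEntry k t) := by
  have hi : i.1 + (m - i.1) = m := by omega
  set e : Fin i.1 ⊕ Fin (m - i.1) ≃ Fin m := finSumFinEquiv.trans (finCongr hi) with he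
  rw [← Matrix.det_submatrix_equiv_self e]
  have hel : ∀ r : Fin i.1, (e (Sum.inl r)).1 = r.1 := by
    intro r; simp [he]
  have her : ∀ r : Fin (m - i.1), (e (Sum.inr r)).1 = i.1 + r.1 := by
    intro r; simp [he]
  have hsa : ∀ v : Fin m, (i.succAbove v).1 = if v.1 < i.1 then v.1 else v.1 + 1 := by
    intro v
    rcases lt_or_ge v.1 i.1 with h | h
    · rw [Fin.succAbove_of_castSucc_lt _ _ (by simpa [Fin.lt_def] using h)]
      simp [h]
    · rw [Fin.succAbove_of_le_castSucc _ _ (by simpa [Fin.le_def] using h)]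
      simp [Nat.not_lt.2 h]
  have hmat : ((Matrix.of fun r c : Fin (m + 1) => bEntry k t (r.1 + 1) (c.1 + 1)).submatrix
        i.succAbove Fin.succ).submatrix e e =
      Matrix.fromBlocks
        (Matrix.of fun r c : Fin i.1 => bEntry k t (r.1 + 1) (c.1 + 2)) 0
        (Matrix.of fun (r : Fin (m - i.1)) (c : Fin i.1) =>
            bEntry k t (i.1 + r.1 + 2) (c.1 + 2))
        (Matrix.of fun r c : Fin (m - i.1) => bEntry k t (r.1 + 1) (c.1 + 1)) := by
    ext x y
    cases x with
    | inl r =>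
      cases y with
      | inl c =>
        simp only [Matrix.submatrix_apply, Matrix.fromBlocks_apply₁₁, Matrix.of_apply]
        have hr : (i.succAbove (e (Sum.inl r))).1 = r.1 := by rw [hsa, hel, if_pos r.2]
        rw [Fin.val_succ, hel, hr]
      | inr c =>
        simp only [Matrix.submatrix_apply, Matrix.fromBlocks_apply₁₂, Matrix.of_apply,
          Matrix.zero_apply]
        have h1 : (i.succAbove (e (Sum.inl r))).1 = r.1 := by rw [hsa, hel, if_pos r.2]
        rw [Fin.val_succ, her, h1]
        exact bE_gt _ _ _ _ (by have := r.2; omega)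
    | inr r =>
      have h1 : (i.succAbove (e (Sum.inr r))).1 = i.1 + r.1 + 1 := by
        rw [hsa, her, if_neg (by omega)]
      cases y with
      | inl c =>
        simp only [Matrix.submatrix_apply, Matrix.fromBlocks_apply₂₁, Matrix.of_apply]
        rw [Fin.val_succ, hel, h1]
      | inr c =>
        simp only [Matrix.submatrix_apply, Matrix.fromBlocks_apply₂₂, Matrix.of_apply]
        rw [Fin.val_succ, her, h1]
        have : bEntry k t (r.1 + 1 + (i.1 + 1)) (c.1 + 1 + (i.1 + 1)) =
            bEntry k t (r.1 + 1) (c.1 + 1) := bE_shift k t (i.1 + 1) _ _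
        rw [← this]
        congr 1 <;> omega
  rw [hmat, Matrix.det_fromBlocks_zero₁₂]
  congr 1
  rw [Matrix.det_of_lowerTriangular _ (by
      intro a b hab
      simp only [Matrix.of_apply]
      exact bE_gt _ _ _ _ (by
        have : (a : ℕ) < b := hab
        omega))]
  have hdiag : ∀ a : Fin i.1, (Matrix.of fun r c : Fin i.1 =>
      bEntry k t (r.1 + 1) (c.1 + 2)) a a = -1 := by
    intro a
    simp only [Matrix.of_apply]
    rw [show a.1 + 2 = (a.1 + 1) + 1 from rfl, bE_succ, ht2]
  rw [Finset.prod_congr rfl fun a _ => hdiag a, Finset.prod_const]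
  simp

theorem det_B_eq_kSOkP (k : ℕ) (hk : 2 ≤ k) (t : ℤ → ℂ) (ht0 : t 0 = 1) (ht1 : t 1 = 2)
    (ht : ∀ j : ℤ, 2 ≤ j → j ≤ (k : ℤ) → t j = 1)
    (p : ℤ → ℂ) (hpinit : p (1 - (k : ℤ)) = 1)
    (hpzero : ∀ n : ℤ, 1 - (k : ℤ) < n → n ≤ 0 → p n = 0)
    (hprec : ∀ n : ℤ, 0 < n →
      p n = 2 * p (n - 1) + ∑ j ∈ Finset.Icc (2 : ℤ) (k : ℤ), p (n - j))
    (n : ℕ) (hn : 1 ≤ n) :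
    detH n (bEntry k t) = p ((n : ℤ) + 1) := by
  have hk2 : (2 : ℤ) ≤ (k : ℤ) := by exact_mod_cast hk
  have ht2 : t 2 = 1 := ht 2 le_rfl hk2
  have hp1 : p 1 = 1 := by
    rw [hprec 1 one_pos]
    have h0 : p (1 - 1) = 0 := hpzero 0 (by omega) le_rfl
    have hsum : ∑ j ∈ Finset.Icc (2 : ℤ) (k : ℤ), p (1 - j) = p (1 - (k : ℤ)) := by
      apply Finset.sum_eq_single_of_mem (k : ℤ) (Finset.mem_Icc.2 ⟨hk2, le_rfl⟩)
      intro j hj hne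
      rw [Finset.mem_Icc] at hj
      exact hpzero (1 - j) (by omega) (by omega)
    rw [h0, hsum, hpinit]; ring
  suffices H : ∀ n : ℕ, detH n (bEntry k t) = p ((n : ℤ) + 1) from H n
  intro n
  induction n using Nat.strong_induction_on with
  | _ n IH =>
    match n with
    | 0 => simp [detH, hp1]
    | Nat.succ m =>
      have step : detH (m + 1) (bEntry k t) =
          ∑ i : Fin (m + 1), (if i.1 < k then t ((i.1 : ℤ) + 1) else 0) *
            p ((m : ℤ) - i.1 + 1) := by
        unfold detH
        rw [Matrix.det_succ_column_zero]
        apply Finset.sum_congr rfl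
        intro i _
        rw [minor_det k t ht2 m i]
        have hA : (Matrix.of fun r c : Fin (m + 1) =>
            bEntry k t (r.1 + 1) (c.1 + 1)) i 0 =
            if i.1 < k then t ((i.1 : ℤ) + 1) else 0 := by
          simp only [Matrix.of_apply, Fin.val_zero]
          exact bE_col k t ht2 i.1
        rw [hA, IH (m - i.1) (by omega)]
        have hc : ((m - i.1 : ℕ) : ℤ) + 1 = (m : ℤ) - i.1 + 1 := by
          have := i.2; omega
        rw [hc]
        have hsq : ((-1 : ℂ)) ^ i.1 * (-1 : ℂ) ^ i.1 = 1 := by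
          rw [← pow_add, ← two_mul, pow_mul]; norm_num
        calc (-1 : ℂ) ^ i.1 * ((if i.1 < k then t ((i.1 : ℤ) + 1) else 0)) *
              ((-1) ^ i.1 * p ((m : ℤ) - i.1 + 1))
            = ((-1 : ℂ) ^ i.1 * (-1 : ℂ) ^ i.1) *
              ((if i.1 < k then t ((i.1 : ℤ) + 1) else 0) * p ((m : ℤ) - i.1 + 1)) := by ring
          _ = _ := by rw [hsq, one_mul]
      rw [step, Fin.sum_univ_eq_sum_range
        (fun i => (if i < k then t ((i : ℤ) + 1) else 0) * p ((m : ℤ) - i + 1))]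
      -- drop the zero terms with i ≥ k
      have h1 : ∑ i ∈ Finset.range (m + 1),
          (if i < k then t ((i : ℤ) + 1) else 0) * p ((m : ℤ) - i + 1) =
          ∑ i ∈ Finset.range (min (m + 1) k),
            t ((i : ℤ) + 1) * p ((m : ℤ) - i + 1) := by
        rw [← Finset.sum_subset (Finset.range_subset_range.2 (min_le_left (m + 1) k))
          (fun x hx hx' => by
            rw [Finset.mem_range] at hx
            rw [Finset.mem_range, not_lt] at hx'
            rw [if_neg (by omega), zero_mul])]
        apply Finset.sum_congr rfl
        intro i hi
        rw [Finset.mem_range] at hi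
        rw [if_pos (by omega)]
      -- extend to range k, the extra terms vanish since p is zero there
      have h2 : ∑ i ∈ Finset.range (min (m + 1) k),
            t ((i : ℤ) + 1) * p ((m : ℤ) - i + 1) =
          ∑ i ∈ Finset.range k, t ((i : ℤ) + 1) * p ((m : ℤ) - i + 1) := by
        apply Finset.sum_subset (Finset.range_subset_range.2 (min_le_right (m + 1) k))
        intro x hx hx'
        rw [Finset.mem_range] at hx
        rw [Finset.mem_range, not_lt] at hx'
        have hx2 : m + 1 ≤ x := by omega
        rw [hpzero ((m : ℤ) - x + 1) (by omega) (by omega), mul_zero]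
      rw [h1, h2]
      -- now evaluate the recurrence for p
      have hrec := hprec ((m : ℤ) + 2) (by omega)
      have hgoal : ((m + 1 : ℕ) : ℤ) + 1 = (m : ℤ) + 2 := by push_cast; ring
      rw [hgoal, hrec]
      have hsum : ∑ j ∈ Finset.Icc (2 : ℤ) (k : ℤ), p ((m : ℤ) + 2 - j) =
          ∑ i ∈ Finset.range (k - 1), p ((m : ℤ) - i) := by
        refine Finset.sum_nbij' (fun j => (j - 2).toNat) (fun i => (i : ℤ) + 2) ?_ ?_ ?_ ?_ ?_
        · intro a ha
          rw [Finset.mem_Icc] at ha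
          rw [Finset.mem_range]
          omega
        · intro a ha
          rw [Finset.mem_range] at ha
          rw [Finset.mem_Icc]
          omega
        · intro a ha
          rw [Finset.mem_Icc] at ha
          omega
        · intro a ha
          omega
        · intro a ha
          rw [Finset.mem_Icc] at ha
          congr 1
          omega
      rw [hsum]
      -- split off the first term of the range-k sum
      have hk1 : k = (k - 1) + 1 := by omega
      have hterm : ∀ i ∈ Finset.range (k - 1),
          t ((i : ℤ) + 1 + 1) * p ((m : ℤ) - ((i : ℤ) + 1) + 1) = p ((m : ℤ) - i) := by
        intro i hi
        rw [Finset.mem_range] at hi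
        rw [ht ((i : ℤ) + 1 + 1) (by omega) (by omega), one_mul]
        congr 1
        ring
      conv_lhs => rw [hk1, Finset.sum_range_succ']
      simp only [Nat.cast_zero, zero_add, sub_zero, Nat.cast_add, Nat.cast_one]
      rw [ht1, Finset.sum_congr rfl hterm,
        show (m : ℤ) + 1 = (m : ℤ) + 2 - 1 from by ring]
      ring
end

section
/- Let k ≥ 2 be an integer, t_1, …, t_k complex numbers with t_2 ≠ 0, and n ≥ 1. Then per(H_{k,n}) = F_{k,n+1}(t). -/
open Finset

noncomputable def perH (m : ℕ) (a : ℕ → ℕ → ℂ) : ℂ :=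
  ∑ σ : Equiv.Perm (Fin m), ∏ i : Fin m, a (i.1 + 1) ((σ i).1 + 1)

/-- Entry (r,s) (1-based) of the matrix `H_{k,n}`:
`i^{r-s} * t_{r-s+1} / t_2^{r-s}` if `-1 ≤ r-s < k`, and `0` otherwise. -/
noncomputable def hEntry (k : ℕ) (t : ℤ → ℂ) (r s : ℕ) : ℂ :=
  if -1 ≤ (r : ℤ) - s ∧ (r : ℤ) - s < k then
    Complex.I ^ ((r : ℤ) - s) * t ((r : ℤ) - s + 1) / t 2 ^ ((r : ℤ) - s)
  else 0

noncomputable def Arow (k : ℕ) (t : ℤ → ℂ) (d : ℕ) (r s : ℕ) : ℂ :=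
  if s = 1 then hEntry k t (r + d) 1 else hEntry k t r s

lemma hEntry_congr (k : ℕ) (t : ℤ → ℂ) {r s r' s' : ℕ}
    (h : (r:ℤ) - s = (r':ℤ) - s') : hEntry k t r s = hEntry k t r' s' := by
  simp only [hEntry, h]

lemma perH_zero (a : ℕ → ℕ → ℂ) : perH 0 a = 1 := by
  simp [perH]

lemma perH_one (a : ℕ → ℕ → ℂ) : perH 1 a = a 1 1 := by
  simp [perH]

lemma perH_succ (n : ℕ) (a : ℕ → ℕ → ℂ) :
    perH (n+1) a = ∑ p : Fin (n+1), a 1 (p.1+1) *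
      ∑ τ : Equiv.Perm (Fin n), ∏ i : Fin n,
        a (i.1+2) (((Equiv.swap 0 p) ((τ i).succ)).1 + 1) := by
  rw [perH]
  rw [← (Equiv.sum_comp Equiv.Perm.decomposeFin.symm
    (fun σ => ∏ i : Fin (n+1), a (i.1 + 1) ((σ i).1 + 1)))]
  rw [Fintype.sum_prod_type]
  refine Finset.sum_congr rfl fun p _ => ?_
  rw [Finset.mul_sum]
  refine Finset.sum_congr rfl fun τ _ => ?_
  rw [Fin.prod_univ_succ]
  simp [Equiv.Perm.decomposeFin_symm_apply_zero, Equiv.Perm.decomposeFin_symm_apply_succ,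
    mul_assoc]

lemma swap01_val {n : ℕ} (x : Fin (n+1)) :
    ((Equiv.swap (0 : Fin (n+2)) 1) x.succ).1 = if x.1 = 0 then 0 else x.1 + 1 := by
  by_cases h : x = 0
  · subst h
    have : ((0 : Fin (n+1)).succ : Fin (n+2)) = 1 := rfl
    rw [this, Equiv.swap_apply_right]
    simp
  · have h0 : x.succ ≠ 0 := Fin.succ_ne_zero x
    have h1 : x.succ ≠ 1 := by
      intro hc
      apply h
      have : x.succ = (0 : Fin (n+1)).succ := by rw [hc]; rfl
      exact Fin.succ_injective _ this
    rw [Equiv.swap_apply_of_ne_of_ne h0 h1]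
    have : x.1 ≠ 0 := fun hc => h (Fin.ext hc)
    simp [Fin.val_succ, this]

lemma Arow_shift0 (k : ℕ) (t : ℤ → ℂ) (d : ℕ) (r s : ℕ) :
    Arow k t d (r+2) (s+2) = Arow k t 0 (r+1) (s+1) := by
  unfold Arow
  by_cases h : s = 0
  · subst h
    simp only [if_neg (by omega : (2:ℕ) ≠ 1), if_pos rfl]
    exact hEntry_congr k t (by push_cast; ring)
  · rw [if_neg (by omega), if_neg (by omega)]
    exact hEntry_congr k t (by push_cast; ring)

lemma Arow_shift1 (k : ℕ) (t : ℤ → ℂ) (d : ℕ) (r s : ℕ) :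
    Arow k t d (r+2) (if s = 0 then 1 else s+2) = Arow k t (d+1) (r+1) (s+1) := by
  unfold Arow
  by_cases h : s = 0
  · subst h
    have h1 : (if (0:ℕ) = 0 then 1 else 0+2) = 1 := rfl
    rw [h1, if_pos rfl, if_pos rfl]
    have : r + 2 + d = r + 1 + (d + 1) := by omega
    rw [this]
  · rw [if_neg h, if_neg (by omega), if_neg (by omega)]
    exact hEntry_congr k t (by push_cast; ring)

lemma Arow_one_one (k : ℕ) (t : ℤ → ℂ) (d : ℕ) : Arow k t d 1 1 = hEntry k t (1+d) 1 := by
  unfold Arow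
  rw [if_pos rfl, Nat.add_comm]

lemma Arow_one_big (k : ℕ) (t : ℤ → ℂ) (d s : ℕ) (hs : 3 ≤ s) : Arow k t d 1 s = 0 := by
  unfold Arow
  rw [if_neg (by omega), hEntry]
  rw [if_neg (by push_cast; omega)]

lemma Q_rec (k : ℕ) (t : ℤ → ℂ) (m : ℕ) (hm : 1 ≤ m) (d : ℕ) :
    perH (m+1) (Arow k t d) =
      hEntry k t (1+d) 1 * perH m (Arow k t 0)
      + hEntry k t 1 2 * perH m (Arow k t (d+1)) := by
  obtain ⟨n, rfl⟩ : ∃ n, m = n + 1 := ⟨m - 1, by omega⟩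
  rw [perH_succ, Fin.sum_univ_succ, Fin.sum_univ_succ]
  have h3 : (∑ p : Fin n, Arow k t d 1 (p.succ.succ.1 + 1) *
      ∑ τ : Equiv.Perm (Fin (n+1)), ∏ i : Fin (n+1),
        Arow k t d (i.1+2) (((Equiv.swap 0 p.succ.succ) ((τ i).succ)).1 + 1)) = 0 :=
    Finset.sum_eq_zero fun p _ => by
      rw [Arow_one_big k t d _ (by simp [Fin.val_succ]), zero_mul]
  rw [h3, add_zero]
  congr 1
  · -- p = 0 term
    have hc : Arow k t d 1 ((0 : Fin (n+2)).1 + 1) = hEntry k t (1+d) 1 := Arow_one_one k t d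
    rw [hc]
    congr 1
    rw [perH]
    refine Finset.sum_congr rfl fun τ _ => Finset.prod_congr rfl fun i _ => ?_
    rw [Equiv.swap_self]
    show Arow k t d (i.1+2) ((τ i).succ.1 + 1) = _
    rw [Fin.val_succ]
    exact Arow_shift0 k t d i.1 (τ i).1
  · -- p = 1 term
    have hc : Arow k t d 1 (((0:Fin (n+1)).succ : Fin (n+2)).1 + 1) = hEntry k t 1 2 := by
      show Arow k t d 1 2 = _
      unfold Arow
      rw [if_neg (by omega)]
    rw [hc]
    congr 1
    rw [perH]
    refine Finset.sum_congr rfl fun τ _ => Finset.prod_congr rfl fun i _ => ?_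
    have h01 : ((0:Fin (n+1)).succ : Fin (n+2)) = 1 := rfl
    rw [h01, swap01_val]
    have : (if (τ i).1 = 0 then 0 else (τ i).1 + 1) + 1
        = if (τ i).1 = 0 then 1 else (τ i).1 + 2 := by split_ifs <;> rfl
    rw [this]
    exact Arow_shift1 k t d i.1 (τ i).1

lemma hE12 (k : ℕ) (hk : 2 ≤ k) (t : ℤ → ℂ) (ht0 : t 0 = 1) :
    hEntry k t 1 2 = -Complex.I * t 2 := by
  rw [hEntry]
  have h1 : ((1:ℕ):ℤ) - ((2:ℕ):ℤ) = -1 := by norm_num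
  rw [if_pos (by rw [h1]; constructor <;> omega)]
  rw [h1]
  norm_num [zpow_neg, ht0, Complex.inv_I]

lemma hE_col1 (k : ℕ) (t : ℤ → ℂ) (j : ℕ) :
    hEntry k t (1+j) 1 = if (j:ℤ) < k then Complex.I ^ j * t ((j:ℤ)+1) / t 2 ^ j else 0 := by
  rw [hEntry]
  have h1 : ((1+j:ℕ):ℤ) - ((1:ℕ):ℤ) = (j:ℤ) := by push_cast; ring
  rw [h1]
  by_cases h : (j:ℤ) < k
  · rw [if_pos ⟨by omega, h⟩, if_pos h, zpow_natCast, zpow_natCast]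
  · rw [if_neg (by tauto), if_neg h]

lemma coeff (k : ℕ) (hk : 2 ≤ k) (t : ℤ → ℂ) (ht0 : t 0 = 1) (ht2 : t 2 ≠ 0) (j : ℕ) :
    hEntry k t 1 2 ^ j * hEntry k t (1+j) 1
      = if (j:ℤ) < k then t ((j:ℤ)+1) else 0 := by
  rw [hE12 k hk t ht0, hE_col1]
  by_cases h : (j:ℤ) < k
  · rw [if_pos h, if_pos h]
    have hI : (-Complex.I) * Complex.I = 1 := by
      rw [neg_mul, Complex.I_mul_I, neg_neg]
    have ht2p : t 2 ^ j ≠ 0 := pow_ne_zero _ ht2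
    rw [div_eq_mul_inv]
    calc (-Complex.I * t 2) ^ j * (Complex.I ^ j * t ((j:ℤ)+1) * (t 2 ^ j)⁻¹)
        = ((-Complex.I) * Complex.I) ^ j * (t 2 ^ j * (t 2 ^ j)⁻¹) * t ((j:ℤ)+1) := by
          ring
      _ = t ((j:ℤ)+1) := by rw [hI, one_pow, mul_inv_cancel₀ ht2p, one_mul, one_mul]
  · rw [if_neg h, if_neg h, mul_zero]

lemma unroll (k : ℕ) (t : ℤ → ℂ) :
    ∀ m, 1 ≤ m → ∀ d, perH m (Arow k t d) =
      ∑ j ∈ Finset.range m,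
        hEntry k t 1 2 ^ j * hEntry k t (1+d+j) 1 * perH (m-1-j) (Arow k t 0) := by
  intro m
  induction m with
  | zero => omega
  | succ m ih =>
    intro _ d
    rcases Nat.eq_zero_or_pos m with hm | hm
    · subst hm
      rw [Finset.sum_range_one, perH_one, perH_zero, Arow_one_one]
      simp
    · rw [Q_rec k t m hm d, ih hm (d+1), Finset.mul_sum, Finset.sum_range_succ', add_comm]
      congr 1
      · refine Finset.sum_congr rfl fun j hj => ?_
        have e1 : 1 + d + (j+1) = 1 + (d+1) + j := by omega
        have e2 : m + 1 - 1 - (j+1) = m - 1 - j := by omega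
        rw [e1, e2]; ring
      · simp

lemma Icc_map (k : ℕ) : Finset.Icc (1:ℤ) (k:ℤ)
    = (Finset.range k).map ⟨fun j : ℕ => (j:ℤ)+1, fun a b h => by simpa using h⟩ := by
  ext x
  simp only [Finset.mem_Icc, Finset.mem_map, Finset.mem_range, Function.Embedding.coeFn_mk]
  constructor
  · intro h
    exact ⟨(x-1).toNat, by omega, by change (((x-1).toNat : ℕ) : ℤ) + 1 = x; omega⟩
  · rintro ⟨j, hj, rfl⟩
    change 1 ≤ (j:ℤ)+1 ∧ (j:ℤ)+1 ≤ k
    omega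

lemma main_lemma (k : ℕ) (hk : 2 ≤ k) (t : ℤ → ℂ) (ht0 : t 0 = 1) (ht2 : t 2 ≠ 0)
    (F : ℤ → ℂ) (hFneg : ∀ n : ℤ, n < 1 → F n = 0) (hF1 : F 1 = 1)
    (hFrec : ∀ n : ℤ, 1 ≤ n →
      F (n + 1) = ∑ j ∈ Finset.Icc (1 : ℤ) (k : ℤ), t j * F (n + 1 - j)) :
    ∀ n : ℕ, perH n (Arow k t 0) = F ((n : ℤ) + 1) := by
  intro n
  induction n using Nat.strong_induction_on with
  | _ n ih =>
    match n with
    | 0 => rw [perH_zero]; norm_num [hF1]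
    | (m+1) =>
      rw [unroll k t (m+1) (by omega) 0]
      have hsum : ∀ j ∈ Finset.range (m+1),
          hEntry k t 1 2 ^ j * hEntry k t (1+0+j) 1 * perH (m+1-1-j) (Arow k t 0)
          = (if (j:ℤ) < k then t ((j:ℤ)+1) else 0) * F ((m:ℤ)+1-j) := by
        intro j hj
        rw [Finset.mem_range] at hj
        have h1 : 1 + 0 + j = 1 + j := by omega
        have h2 : m + 1 - 1 - j = m - j := by omega
        rw [h1, h2, coeff k hk t ht0 ht2 j, ih (m-j) (by omega)]
        have h3 : ((m - j : ℕ) : ℤ) + 1 = (m:ℤ) + 1 - j := by omega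
        rw [h3]
      rw [Finset.sum_congr rfl hsum]
      have hgoalF : F (((m+1:ℕ) : ℤ) + 1) = ∑ i ∈ Finset.Icc (1:ℤ) (k:ℤ),
          t i * F ((m:ℤ) + 2 - i) := by
        have h := hFrec ((m:ℤ)+1) (by omega)
        push_cast
        rw [h]
        exact Finset.sum_congr rfl fun i _ => by rw [show (m:ℤ)+1+1-i = (m:ℤ)+2-i from by ring]
      rw [hgoalF, Icc_map, Finset.sum_map]
      change _ = ∑ j ∈ Finset.range k, t ((j:ℤ)+1) * F ((m:ℤ) + 2 - ((j:ℤ)+1))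
      set N := k + m + 1 with hN
      have hL : (∑ j ∈ Finset.range (m+1),
          (if (j:ℤ) < k then t ((j:ℤ)+1) else 0) * F ((m:ℤ)+1-j))
          = ∑ j ∈ Finset.range N,
          (if (j:ℤ) < k then t ((j:ℤ)+1) else 0) * F ((m:ℤ)+1-j) := by
        refine Finset.sum_subset (Finset.range_subset_range.2 (by omega)) ?_
        intro j _ hj
        rw [Finset.mem_range, not_lt] at hj
        rw [hFneg ((m:ℤ)+1-j) (by omega), mul_zero]
      have hR : (∑ j ∈ Finset.range k, t ((j:ℤ)+1) * F ((m:ℤ) + 2 - ((j:ℤ)+1)))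
          = ∑ j ∈ Finset.range N,
          (if (j:ℤ) < k then t ((j:ℤ)+1) else 0) * F ((m:ℤ)+1-j) := by
        rw [Finset.sum_congr rfl (fun j hj => ?_)]
        · refine Finset.sum_subset (Finset.range_subset_range.2 (by omega)) ?_
          intro j _ hj
          rw [Finset.mem_range, not_lt] at hj
          rw [if_neg (by omega), zero_mul]
        · rw [Finset.mem_range] at hj
          rw [if_pos (by omega), show (m:ℤ)+2-((j:ℤ)+1) = (m:ℤ)+1-j from by ring]
      rw [hL, ← hR]

theorem per_H_eq_genFibPoly (k : ℕ) (hk : 2 ≤ k) (t : ℤ → ℂ) (ht0 : t 0 = 1) (ht2 : t 2 ≠ 0)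
    (F : ℤ → ℂ) (hFneg : ∀ n : ℤ, n < 1 → F n = 0) (hF1 : F 1 = 1)
    (hFrec : ∀ n : ℤ, 1 ≤ n →
      F (n + 1) = ∑ j ∈ Finset.Icc (1 : ℤ) (k : ℤ), t j * F (n + 1 - j))
    (n : ℕ) (hn : 1 ≤ n) :
    perH n (hEntry k t) = F ((n : ℤ) + 1) := by
  have hA : Arow k t 0 = hEntry k t := by
    funext r s
    unfold Arow
    split_ifs with h
    · rw [h, Nat.add_zero]
    · rfl
  rw [← hA]
  exact main_lemma k hk t ht0 ht2 F hFneg hF1 hFrec n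
end

section
/- Let k ≥ 2 be an integer and n ≥ 1, and let D_{k,n} = (d_{ij}) be the n×n matrix with d_{ij} = 1 if −1 ≤ i−j < k and d_{ij} = 0 otherwise (1 ≤ i,j ≤ n). Then per(D_{k,n}) = f_{k,k+n−1}. -/
open Finset

/-- Entry (i,j) (1-based) of the matrix `D_{k,n}`:
`1` if `-1 ≤ i-j < k`, and `0` otherwise. -/
noncomputable def dEntry (k : ℕ) (i j : ℕ) : ℂ :=
  if -1 ≤ (i : ℤ) - j ∧ (i : ℤ) - j < k then 1 else 0

/-- A permutation is `fValid` iff all its matrix entries are in the band. -/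
def fValid (k : ℕ) {n : ℕ} (σ : Equiv.Perm (Fin n)) : Prop :=
  ∀ i : Fin n, (σ i).1 ≤ i.1 + 1 ∧ i.1 < (σ i).1 + k

instance fValid.dec (k n : ℕ) : DecidablePred (fun σ : Equiv.Perm (Fin n) => fValid k σ) :=
  fun σ => by unfold fValid; infer_instance

/-- The number of valid permutations. -/
def Ncount (k n : ℕ) : ℕ :=
  (Finset.univ.filter (fun σ : Equiv.Perm (Fin n) => fValid k σ)).card

lemma perH_eq_card (k n : ℕ) : perH n (dEntry k) = (Ncount k n : ℂ) := by
  unfold perH Ncount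
  rw [← Finset.sum_boole]
  refine Finset.sum_congr rfl (fun σ _ => ?_)
  have h1 : ∀ i : Fin n, dEntry k (i.1 + 1) ((σ i).1 + 1)
      = if ((σ i).1 ≤ i.1 + 1 ∧ i.1 < (σ i).1 + k) then (1 : ℂ) else 0 := by
    intro i
    unfold dEntry
    refine if_congr ?_ rfl rfl
    constructor
    · intro h; push_cast at h; omega
    · intro h; push_cast; omega
  by_cases h : fValid k σ
  · rw [if_pos h]
    exact Finset.prod_eq_one (fun i _ => by rw [h1 i, if_pos (h i)])
  · rw [if_neg h]
    unfold fValid at h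
    push_neg at h
    obtain ⟨i, hi⟩ := h
    refine Finset.prod_eq_zero (Finset.mem_univ i) ?_
    rw [h1 i, if_neg (by omega)]

/-- Forced structure: below the preimage of `0`, a valid permutation shifts up by one. -/
lemma forced {n k : ℕ} (σ : Equiv.Perm (Fin n)) (h : ∀ i : Fin n, (σ i).1 ≤ i.1 + 1)
    (j : Fin n) (hj : (σ j).1 = 0) :
    ∀ i : Fin n, i.1 < j.1 → (σ i).1 = i.1 + 1 := by
  have key : ∀ m : ℕ, ∀ i : Fin n, i.1 = m → i.1 < j.1 → (σ i).1 = i.1 + 1 := by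
    intro m
    induction m using Nat.strong_induction_on with
    | _ m ih =>
      intro i him hij
      have h1 : (σ i).1 ≤ i.1 + 1 := h i
      rcases Nat.lt_or_ge (σ i).1 (i.1 + 1) with hlt | hge
      · exfalso
        rcases Nat.eq_zero_or_pos (σ i).1 with h0 | hpos
        · have he : σ i = σ j := Fin.ext (by omega)
          have := congrArg Fin.val (σ.injective he)
          omega
        · set m' := (σ i).1 - 1 with hm'
          have hm'n : m' < n := by have := i.is_lt; omega
          have h2 : (σ ⟨m', hm'n⟩).1 = m' + 1 :=
            ih m' (by omega) ⟨m', hm'n⟩ rfl (by show m' < j.1; omega)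
          have h3 : σ ⟨m', hm'n⟩ = σ i := Fin.ext (by simp only [h2]; omega)
          have h4 := congrArg Fin.val (σ.injective h3)
          simp only at h4
          omega
      · omega
  exact fun i => key i.1 i rfl

/-- Restriction of a permutation mapping `{j+1,…,n}` into itself. -/
noncomputable def restrPerm (j n : ℕ) (σ : Equiv.Perm (Fin (n + 1)))
    (h1 : ∀ i : Fin (n + 1), j < i.1 → j < (σ i).1) : Equiv.Perm (Fin (n - j)) :=
  Equiv.ofBijective
    (fun m => ⟨(σ ⟨j + 1 + m.1, by have := m.is_lt; omega⟩).1 - (j + 1), by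
      have hgt := h1 ⟨j + 1 + m.1, by have := m.is_lt; omega⟩ (by show j < j + 1 + m.1; omega)
      have hlt := (σ ⟨j + 1 + m.1, by have := m.is_lt; omega⟩).is_lt
      omega⟩)
    (Finite.injective_iff_bijective.mp (by
      intro m₁ m₂ hm
      have hgt1 := h1 ⟨j + 1 + m₁.1, by have := m₁.is_lt; omega⟩ (by show j < j + 1 + m₁.1; omega)
      have hgt2 := h1 ⟨j + 1 + m₂.1, by have := m₂.is_lt; omega⟩ (by show j < j + 1 + m₂.1; omega)
      have hv := congrArg Fin.val hm
      simp only [Fin.val_mk] at hv hgt1 hgt2 ⊢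
      have he : σ ⟨j + 1 + m₁.1, by have := m₁.is_lt; omega⟩
          = σ ⟨j + 1 + m₂.1, by have := m₂.is_lt; omega⟩ := Fin.ext (by omega)
      have := congrArg Fin.val (σ.injective he)
      simp only [Fin.val_mk] at this
      exact Fin.ext (by omega)))

lemma restrPerm_val (j n : ℕ) (σ : Equiv.Perm (Fin (n + 1)))
    (h1 : ∀ i : Fin (n + 1), j < i.1 → j < (σ i).1) (m : Fin (n - j)) :
    (restrPerm j n σ h1 m).1
      = (σ ⟨j + 1 + m.1, by have := m.is_lt; omega⟩).1 - (j + 1) := rfl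

/-- The underlying function of the extension of a permutation of `Fin (n-j)`
by the cycle `(0 1 … j)`. -/
def extFun (j n : ℕ) (hjn : j < n + 1) (τ : Equiv.Perm (Fin (n - j))) :
    Fin (n + 1) → Fin (n + 1) :=
  fun i => if h : i.1 < j then ⟨i.1 + 1, by omega⟩
    else if h2 : i.1 = j then ⟨0, by omega⟩
    else ⟨j + 1 + (τ ⟨i.1 - (j + 1), by have := i.is_lt; omega⟩).1, by
      have := (τ ⟨i.1 - (j + 1), by have := i.is_lt; omega⟩).is_lt; omega⟩

lemma extFun_val_lt (j n : ℕ) (hjn : j < n + 1) (τ : Equiv.Perm (Fin (n - j)))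
    (i : Fin (n + 1)) (h : i.1 < j) : (extFun j n hjn τ i).1 = i.1 + 1 := by
  unfold extFun
  rw [dif_pos h]

lemma extFun_val_eq (j n : ℕ) (hjn : j < n + 1) (τ : Equiv.Perm (Fin (n - j)))
    (i : Fin (n + 1)) (h : i.1 = j) : (extFun j n hjn τ i).1 = 0 := by
  unfold extFun
  rw [dif_neg (by omega), dif_pos h]

lemma extFun_val_gt (j n : ℕ) (hjn : j < n + 1) (τ : Equiv.Perm (Fin (n - j)))
    (i : Fin (n + 1)) (h : j < i.1) :
    (extFun j n hjn τ i).1 = j + 1 + (τ ⟨i.1 - (j + 1), by have := i.is_lt; omega⟩).1 := by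
  unfold extFun
  rw [dif_neg (by omega), dif_neg (by omega)]

/-- Extension of a permutation of `Fin (n-j)` by the cycle `(0 1 … j)`. -/
noncomputable def extPerm (j n : ℕ) (hjn : j < n + 1) (τ : Equiv.Perm (Fin (n - j))) :
    Equiv.Perm (Fin (n + 1)) :=
  Equiv.ofBijective (extFun j n hjn τ)
    (Finite.injective_iff_bijective.mp (by
      intro a b hab
      have hv := congrArg Fin.val hab
      apply Fin.ext
      rcases Nat.lt_trichotomy a.1 j with ha | ha | ha <;>
        rcases Nat.lt_trichotomy b.1 j with hb | hb | hb
      · rw [extFun_val_lt j n hjn τ a ha, extFun_val_lt j n hjn τ b hb] at hv; omega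
      · rw [extFun_val_lt j n hjn τ a ha, extFun_val_eq j n hjn τ b hb] at hv; omega
      · rw [extFun_val_lt j n hjn τ a ha, extFun_val_gt j n hjn τ b hb] at hv; omega
      · rw [extFun_val_eq j n hjn τ a ha, extFun_val_lt j n hjn τ b hb] at hv; omega
      · omega
      · rw [extFun_val_eq j n hjn τ a ha, extFun_val_gt j n hjn τ b hb] at hv; omega
      · rw [extFun_val_gt j n hjn τ a ha, extFun_val_lt j n hjn τ b hb] at hv; omega
      · rw [extFun_val_gt j n hjn τ a ha, extFun_val_eq j n hjn τ b hb] at hv; omega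
      · rw [extFun_val_gt j n hjn τ a ha, extFun_val_gt j n hjn τ b hb] at hv
        have hτ : τ ⟨a.1 - (j + 1), by have := a.is_lt; omega⟩
            = τ ⟨b.1 - (j + 1), by have := b.is_lt; omega⟩ := Fin.ext (by omega)
        have := congrArg Fin.val (τ.injective hτ)
        simp only [Fin.val_mk] at this
        omega))

lemma extPerm_val_lt (j n : ℕ) (hjn : j < n + 1) (τ : Equiv.Perm (Fin (n - j)))
    (i : Fin (n + 1)) (h : i.1 < j) : (extPerm j n hjn τ i).1 = i.1 + 1 :=
  extFun_val_lt j n hjn τ i h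

lemma extPerm_val_eq (j n : ℕ) (hjn : j < n + 1) (τ : Equiv.Perm (Fin (n - j)))
    (i : Fin (n + 1)) (h : i.1 = j) : (extPerm j n hjn τ i).1 = 0 :=
  extFun_val_eq j n hjn τ i h

lemma extPerm_val_gt (j n : ℕ) (hjn : j < n + 1) (τ : Equiv.Perm (Fin (n - j)))
    (i : Fin (n + 1)) (h : j < i.1) :
    (extPerm j n hjn τ i).1 = j + 1 + (τ ⟨i.1 - (j + 1), by have := i.is_lt; omega⟩).1 :=
  extFun_val_gt j n hjn τ i h

section Fiber

/-- Structural facts about a valid permutation whose inverse sends `0` to `j`. -/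
lemma fiber_facts {k n : ℕ} (j : ℕ) (hjn : j < n + 1)
    (σ : Equiv.Perm (Fin (n + 1))) (hval : fValid k σ) (hj : (σ.symm 0).1 = j) :
    (σ ⟨j, hjn⟩).1 = 0 ∧ (∀ i : Fin (n + 1), i.1 < j → (σ i).1 = i.1 + 1) ∧
      (∀ i : Fin (n + 1), j < i.1 → j < (σ i).1) := by
  have hj0 : σ ⟨j, hjn⟩ = 0 := by
    have h0 : σ (σ.symm 0) = 0 := σ.apply_symm_apply 0
    have he : σ.symm 0 = ⟨j, hjn⟩ := Fin.ext hj
    rwa [he] at h0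
  have hj0v : (σ ⟨j, hjn⟩).1 = 0 := by rw [hj0]; rfl
  have hforced := forced (k := k) σ (fun i => (hval i).1) ⟨j, hjn⟩ hj0v
  refine ⟨hj0v, fun i hi => hforced i hi, ?_⟩
  intro i hi
  by_contra hcon
  push_neg at hcon
  rcases Nat.eq_zero_or_pos (σ i).1 with h0 | hpos
  · have he : σ i = σ ⟨j, hjn⟩ := Fin.ext (by omega)
    have := congrArg Fin.val (σ.injective he)
    simp only [Fin.val_mk] at this
    omega
  · set m' := (σ i).1 - 1 with hm'
    have hm'n : m' < n + 1 := by omega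
    have h2 : (σ ⟨m', hm'n⟩).1 = m' + 1 := hforced ⟨m', hm'n⟩ (by show m' < j; omega)
    have h3 : σ ⟨m', hm'n⟩ = σ i := Fin.ext (by simp only [h2]; omega)
    have h4 := congrArg Fin.val (σ.injective h3)
    simp only [Fin.val_mk] at h4
    omega

/-- The fiber of valid permutations with `σ⁻¹ 0 = j` is counted by `Ncount k (n - j)`. -/
lemma fiber_card (k n : ℕ) (j : ℕ) (hjk : j < k) (hjn : j < n + 1) :
    (Finset.univ.filter
      (fun σ : Equiv.Perm (Fin (n + 1)) => fValid k σ ∧ ((σ.symm 0).1 = j))).card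
      = Ncount k (n - j) := by
  unfold Ncount
  refine Finset.card_bij'
    (fun σ hσ => restrPerm j n σ
      (fiber_facts j hjn σ (Finset.mem_filter.mp hσ).2.1 (Finset.mem_filter.mp hσ).2.2).2.2)
    (fun τ _ => extPerm j n hjn τ) ?_ ?_ ?_ ?_
  · -- restriction is valid
    intro σ hσ
    obtain ⟨hval, hj⟩ := (Finset.mem_filter.mp hσ).2
    obtain ⟨hj0, hfor, hup⟩ := fiber_facts j hjn σ hval hj
    rw [Finset.mem_filter]
    refine ⟨Finset.mem_univ _, fun m => ?_⟩
    rw [restrPerm_val]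
    have hb : j + 1 + m.1 < n + 1 := by have := m.is_lt; omega
    have h1 := hval ⟨j + 1 + m.1, hb⟩
    have h2 := hup ⟨j + 1 + m.1, hb⟩ (by show j < j + 1 + m.1; omega)
    simp only [Fin.val_mk] at h1 h2 ⊢
    omega
  · -- extension is in the fiber
    intro τ hτ
    have hτv : fValid k τ := (Finset.mem_filter.mp hτ).2
    rw [Finset.mem_filter]
    refine ⟨Finset.mem_univ _, ?_, ?_⟩
    · intro i
      rcases Nat.lt_trichotomy i.1 j with h | h | h
      · rw [extPerm_val_lt j n hjn τ i h]; omega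
      · rw [extPerm_val_eq j n hjn τ i h]; omega
      · rw [extPerm_val_gt j n hjn τ i h]
        have := hτv ⟨i.1 - (j + 1), by have := i.is_lt; omega⟩
        simp only [Fin.val_mk] at this
        omega
    · have h0 : extPerm j n hjn τ ⟨j, hjn⟩ = 0 :=
        Fin.ext (by rw [extPerm_val_eq j n hjn τ ⟨j, hjn⟩ rfl]; rfl)
      have : (extPerm j n hjn τ).symm 0 = ⟨j, hjn⟩ := by
        rw [Equiv.symm_apply_eq, h0]
      rw [this]
  · -- left inverse
    intro σ hσ
    obtain ⟨hval, hj⟩ := (Finset.mem_filter.mp hσ).2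
    obtain ⟨hj0, hfor, hup⟩ := fiber_facts j hjn σ hval hj
    apply Equiv.ext
    intro i
    apply Fin.ext
    rcases Nat.lt_trichotomy i.1 j with h | h | h
    · rw [extPerm_val_lt j n hjn _ i h, hfor i h]
    · rw [extPerm_val_eq j n hjn _ i h]
      have : i = (⟨j, hjn⟩ : Fin (n + 1)) := Fin.ext h
      rw [this, hj0]
    · rw [extPerm_val_gt j n hjn _ i h, restrPerm_val]
      have hgt := hup i h
      have hieq : (⟨j + 1 + ((⟨i.1 - (j + 1), by have := i.is_lt; omega⟩ : Fin (n - j)).1),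
          by have := i.is_lt; simp only [Fin.val_mk]; omega⟩ : Fin (n + 1)) = i := by
        apply Fin.ext
        simp only [Fin.val_mk]
        omega
      rw [hieq]
      omega
  · -- right inverse
    intro τ hτ
    apply Equiv.ext
    intro m
    apply Fin.ext
    rw [restrPerm_val]
    have hb : j + 1 + m.1 < n + 1 := by have := m.is_lt; omega
    rw [extPerm_val_gt j n hjn τ ⟨j + 1 + m.1, hb⟩ (by show j < j + 1 + m.1; omega)]
    have hm : (⟨(⟨j + 1 + m.1, hb⟩ : Fin (n + 1)).1 - (j + 1),
        by simp only [Fin.val_mk]; have := m.is_lt; omega⟩ : Fin (n - j)) = m := by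
      apply Fin.ext
      simp only [Fin.val_mk]
      omega
    rw [hm]
    omega

end Fiber

lemma Ncount_rec (k n : ℕ) (hk : 1 ≤ k) :
    Ncount k (n + 1) = ∑ j ∈ Finset.range (min k (n + 1)), Ncount k (n - j) := by
  have hmem : ∀ σ ∈ Finset.univ.filter (fun σ : Equiv.Perm (Fin (n + 1)) => fValid k σ),
      (fun σ : Equiv.Perm (Fin (n + 1)) => (σ.symm 0).1) σ ∈ Finset.range (min k (n + 1)) := by
    intro σ hσ
    have hval : fValid k σ := (Finset.mem_filter.mp hσ).2
    have h1 := (hval (σ.symm 0)).2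
    simp only [Equiv.apply_symm_apply, Fin.val_zero] at h1
    simp only [Finset.mem_range, lt_min_iff]
    exact ⟨by omega, (σ.symm 0).is_lt⟩
  rw [show Ncount k (n + 1) = (Finset.univ.filter
      (fun σ : Equiv.Perm (Fin (n + 1)) => fValid k σ)).card from rfl,
    Finset.card_eq_sum_card_fiberwise hmem]
  refine Finset.sum_congr rfl (fun j hj => ?_)
  rw [Finset.mem_range, lt_min_iff] at hj
  rw [Finset.filter_filter]
  exact fiber_card k n j hj.1 hj.2

lemma Ncount_zero (k : ℕ) : Ncount k 0 = 1 := by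
  unfold Ncount
  have he : (Finset.univ.filter (fun σ : Equiv.Perm (Fin 0) => fValid k σ))
      = Finset.univ :=
    Finset.filter_true_of_mem (fun σ _ => by intro i; exact i.elim0)
  rw [he, Finset.card_univ]
  simp [Fintype.card_perm]

theorem per_D_eq_genFib (k : ℕ) (hk : 2 ≤ k)
    (f : ℤ → ℂ) (hf0 : ∀ n : ℤ, 1 ≤ n → n ≤ (k : ℤ) - 2 → f n = 0)
    (hfk1 : f ((k : ℤ) - 1) = 1) (hfk : f (k : ℤ) = 1)
    (hfrec : ∀ n : ℤ, (k : ℤ) < n → f n = ∑ j ∈ Finset.Icc (1 : ℤ) (k : ℤ), f (n - j))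
    (n : ℕ) (hn : 1 ≤ n) :
    perH n (dEntry k) = f ((k : ℤ) + n - 1) := by
  have key : ∀ n : ℕ, (Ncount k n : ℂ) = f ((k : ℤ) + n - 1) := by
    intro n
    induction n using Nat.strong_induction_on with
    | _ n ih =>
      match n with
      | 0 =>
        rw [Ncount_zero]
        have harg : (k : ℤ) + (0 : ℕ) - 1 = (k : ℤ) - 1 := by push_cast; ring
        rw [harg, hfk1]
        norm_num
      | Nat.succ m =>
        rw [Ncount_rec k m (by omega), Nat.cast_sum]
        have hterm : ∀ j ∈ Finset.range (min k (m + 1)),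
            ((Ncount k (m - j) : ℂ)) = f ((k : ℤ) + ((m - j : ℕ) : ℤ) - 1) := by
          intro j hj
          exact ih (m - j) (by omega)
        rw [Finset.sum_congr rfl hterm]
        match m with
        | 0 =>
          have hmin : min k 1 = 1 := by omega
          rw [hmin]
          rw [Finset.sum_range_one]
          have h1 : (k : ℤ) + ((0 - 0 : ℕ) : ℤ) - 1 = (k : ℤ) - 1 := by norm_num
          have h2 : (k : ℤ) + ((1 : ℕ) : ℤ) - 1 = (k : ℤ) := by push_cast; ring
          rw [h1, h2, hfk1, hfk]
        | Nat.succ m' =>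
          -- now m = m' + 1 ≥ 1
          have hrec := hfrec ((k : ℤ) + (m' + 1)) (by push_cast; omega)
          have hmap : Finset.Icc (1 : ℤ) (k : ℤ)
              = Finset.map ⟨fun j : ℕ => (j : ℤ) + 1, by intro a b hab; simpa using hab⟩
                (Finset.range k) := by
            ext x
            simp only [Finset.mem_Icc, Finset.mem_map, Finset.mem_range,
              Function.Embedding.coeFn_mk]
            constructor
            · rintro ⟨hx1, hx2⟩
              exact ⟨(x - 1).toNat, by omega, show (((x - 1).toNat : ℕ) : ℤ) + 1 = x by omega⟩
            · rintro ⟨a, ha, rfl⟩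
              show 1 ≤ (a : ℤ) + 1 ∧ (a : ℤ) + 1 ≤ k
              omega
          rw [hmap, Finset.sum_map] at hrec
          change f _ = ∑ x ∈ Finset.range k, f (_ - ((x : ℤ) + 1)) at hrec
          have hgoal : f ((k : ℤ) + ((Nat.succ m' + 1 : ℕ) : ℤ) - 1)
              = f ((k : ℤ) + (m' + 1)) := by
            apply congrArg f
            push_cast
            ring
          rw [hgoal, hrec]
          rcases Nat.le_total k (m' + 2) with hkm | hkm
          · -- min k (m'+2) = k
            have hmin : min k (m' + 1 + 1) = k := by omega
            rw [hmin]
            refine Finset.sum_congr rfl (fun j hj => ?_)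
            rw [Finset.mem_range] at hj
            apply congrArg f
            have : j ≤ m' + 1 := by omega
            omega
          · -- min k (m'+2) = m'+2, split the RHS sum
            have hmin : min k (m' + 1 + 1) = m' + 2 := by omega
            rw [hmin]
            rw [Finset.range_eq_Ico k, ← Finset.sum_Ico_consecutive _
              (by omega : 0 ≤ m' + 2) (by omega : m' + 2 ≤ k)]
            have htail : ∑ j ∈ Finset.Ico (m' + 2) k, f ((k : ℤ) + (m' + 1) - ((j : ℤ) + 1))
                = 0 := by
              refine Finset.sum_eq_zero (fun j hj => ?_)
              rw [Finset.mem_Ico] at hj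
              apply hf0
              · omega
              · omega
            rw [htail, add_zero, ← Finset.range_eq_Ico]
            refine Finset.sum_congr rfl (fun j hj => ?_)
            rw [Finset.mem_range] at hj
            apply congrArg f
            have : j ≤ m' + 1 := by omega
            omega
  rw [perH_eq_card, key]
end
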